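/- Let a = s_{i_1}⋯s_{i_r} be a reduced word for w ∈ S_n, let s = s_{i_r}, and let a/s be the word s_{i_1}⋯s_{i_{r-1}} (a reduced word for ws). Define P_x(a) = Σ_{σ : π(w^σ)=x} q^{|D(σ)|}, the generating polynomial of the defect statistic over masks whose product is x. Then for all x ∈ S_n: P_x(a) = q^{c_s(x)} P_x(a/s) + q^{1−c_s(x)} P_{xs}(a/s), where c_s(x) = 1 if ℓ(xs) < ℓ(x) and c_s(x) = 0 otherwise. -/

import Mathlib

open Polynomial

/-- The simple transposition `s_i = (i, i+1)` (1-based) in `S_n`, acting on `Fin n`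
(0-based positions `i-1` and `i`); equals `1` if `i` is out of range. -/
def gen (n : ℕ) (i : ℕ) : Equiv.Perm (Fin n) :=
  if h : 1 ≤ i ∧ i < n then Equiv.swap ⟨i - 1, by omega⟩ ⟨i, h.2⟩ else 1

/-- Product of the word `l` of generator indices. -/
def wordProd (n : ℕ) (l : List ℕ) : Equiv.Perm (Fin n) :=
  (l.map (gen n)).prod

/-- Coxeter length of `w ∈ S_n`. -/
noncomputable def len (n : ℕ) (w : Equiv.Perm (Fin n)) : ℕ :=
  sInf {r | ∃ l : List ℕ, (∀ i ∈ l, 1 ≤ i ∧ i < n) ∧ wordProd n l = w ∧ l.length = r}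

/-- `l` is a reduced word for `w`. -/
def IsReducedWord (n : ℕ) (w : Equiv.Perm (Fin n)) (l : List ℕ) : Prop :=
  (∀ i ∈ l, 1 ≤ i ∧ i < n) ∧ wordProd n l = w ∧ l.length = len n w

/-- Bruhat-Chevalley order: `x ≤ w` iff every reduced word for `w` contains a
subword whose product is `x`. -/
def Bruhat (n : ℕ) (x w : Equiv.Perm (Fin n)) : Prop :=
  ∀ l, IsReducedWord n w l → ∃ t, t.Sublist l ∧ wordProd n t = x

/-- `w` is 321-avoiding: no `i < j < k` with `w i > w j > w k`. -/
def Avoids321 (n : ℕ) (w : Equiv.Perm (Fin n)) : Prop :=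
  ¬ ∃ i j k : Fin n, i < j ∧ j < k ∧ w j < w i ∧ w k < w j

/-- Product of the subword of `l` selected by the mask `S` (set of selected positions). -/
def maskProd (n : ℕ) (l : List ℕ) (S : Finset ℕ) : Equiv.Perm (Fin n) :=
  wordProd n (((List.range l.length).filter (fun j => decide (j ∈ S))).map (fun j => l.getD j 0))

/-- Position `j` of the word `l` is a defect of the mask `S`. -/
noncomputable def IsDefect (n : ℕ) (l : List ℕ) (S : Finset ℕ) (j : ℕ) : Prop :=
  len n (maskProd n (l.take j) S * gen n (l.getD j 0)) < len n (maskProd n (l.take j) S)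

/-- The defect set `D(σ)` of the mask `S` on the word `l`. -/
noncomputable def defectSet (n : ℕ) (l : List ℕ) (S : Finset ℕ) : Finset ℕ :=
  (Finset.range l.length).filter (fun j =>
    len n (maskProd n (l.take j) S * gen n (l.getD j 0)) < len n (maskProd n (l.take j) S))

/-- Deodhar's defect generating polynomial `P_x(a) = Σ_{σ : π(w^σ) = x} q^{|D(σ)|}`. -/
noncomputable def defPoly (n : ℕ) (l : List ℕ) (x : Equiv.Perm (Fin n)) : Polynomial ℤ :=
  ∑ S ∈ (Finset.range l.length).powerset,
    if maskProd n l S = x then (X : Polynomial ℤ) ^ (defectSet n l S).card else 0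


lemma gen_mul_self (n i : ℕ) : gen n i * gen n i = 1 := by
  unfold gen; split_ifs with h
  · exact Equiv.swap_mul_self _ _
  · exact one_mul 1

lemma sign_gen (n i : ℕ) (h : 1 ≤ i ∧ i < n) : Equiv.Perm.sign (gen n i) = -1 := by
  unfold gen; rw [dif_pos h]
  refine Equiv.Perm.sign_swap ?_
  simp only [ne_eq, Fin.mk.injEq]
  omega

lemma wordProd_append (n : ℕ) (a b : List ℕ) :
    wordProd n (a ++ b) = wordProd n a * wordProd n b := by
  unfold wordProd; rw [List.map_append, List.prod_append]

lemma exists_word (n : ℕ) (w : Equiv.Perm (Fin n)) :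
    ∃ l : List ℕ, (∀ i ∈ l, 1 ≤ i ∧ i < n) ∧ wordProd n l = w := by
  match n with
  | 0 => exact ⟨[], by simp, Subsingleton.elim _ _⟩
  | (m+1) =>
    have hw : w ∈ Submonoid.closure (Set.range fun i : Fin m => Equiv.swap i.castSucc i.succ) := by
      rw [Equiv.Perm.mclosure_swap_castSucc_succ]; trivial
    obtain ⟨L, hL, hprod⟩ := Submonoid.exists_list_of_mem_closure hw
    clear hw
    induction L generalizing w with
    | nil => exact ⟨[], by simp, by simpa [wordProd] using hprod⟩
    | cons p L ih =>
      obtain ⟨l, hl, hwp⟩ := ih (L.prod) (fun y hy => hL y (List.mem_cons_of_mem _ hy)) rfl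
      obtain ⟨i, hi⟩ := hL p (List.mem_cons_self)
      refine ⟨((i : ℕ) + 1) :: l, ?_, ?_⟩
      · intro j hj
        rcases List.mem_cons.mp hj with h | h
        · subst h; exact ⟨by omega, by omega⟩
        · exact hl j h
      · rw [← hprod, List.prod_cons, ← hwp]
        unfold wordProd
        rw [List.map_cons, List.prod_cons]
        congr 1
        rw [← hi]
        unfold gen
        rw [dif_pos ⟨by omega, by omega⟩]
        congr 1 <;> apply Fin.ext <;> simp

lemma len_spec (n : ℕ) (w : Equiv.Perm (Fin n)) :
    ∃ l : List ℕ, (∀ i ∈ l, 1 ≤ i ∧ i < n) ∧ wordProd n l = w ∧ l.length = len n w := by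
  have hne : {r | ∃ l : List ℕ, (∀ i ∈ l, 1 ≤ i ∧ i < n) ∧ wordProd n l = w ∧ l.length = r}.Nonempty := by
    obtain ⟨l, h1, h2⟩ := exists_word n w
    exact ⟨l.length, l, h1, h2, rfl⟩
  exact Nat.sInf_mem hne

lemma sign_wordProd (n : ℕ) (l : List ℕ) (h : ∀ i ∈ l, 1 ≤ i ∧ i < n) :
    Equiv.Perm.sign (wordProd n l) = (-1) ^ l.length := by
  induction l with
  | nil => simp [wordProd]
  | cons a l ih =>
    unfold wordProd at *
    rw [List.map_cons, List.prod_cons, map_mul, ih (fun i hi => h i (List.mem_cons_of_mem _ hi)),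
      sign_gen n a (h a (List.mem_cons_self)), List.length_cons, pow_succ]
    rw [mul_comm]

lemma sign_eq_len (n : ℕ) (w : Equiv.Perm (Fin n)) :
    Equiv.Perm.sign w = (-1) ^ len n w := by
  obtain ⟨l, h1, h2, h3⟩ := len_spec n w
  rw [← h3, ← h2, sign_wordProd n l h1]

lemma len_mul_gen_ne (n i : ℕ) (hi : 1 ≤ i ∧ i < n) (x : Equiv.Perm (Fin n)) :
    len n (x * gen n i) ≠ len n x := by
  intro h
  have h1 := sign_eq_len n (x * gen n i)
  rw [map_mul, sign_gen n i hi, sign_eq_len n x, h] at h1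
  rw [mul_eq_left] at h1
  simp at h1

lemma take_dropLast (l : List ℕ) (j : ℕ) (hj : j ≤ l.length - 1) :
    l.take j = l.dropLast.take j := by
  rw [List.dropLast_eq_take, List.take_take, min_eq_left hj]

lemma getD_dropLast (l : List ℕ) (j : ℕ) (hj : j < l.length - 1) :
    l.dropLast.getD j 0 = l.getD j 0 := by
  rw [List.getD_eq_getElem _ _ (by rw [List.length_dropLast]; exact hj),
    List.getD_eq_getElem _ _ (by omega)]
  exact List.getElem_dropLast ..

lemma maskProd_congr (n : ℕ) (m : List ℕ) (S T : Finset ℕ)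
    (h : ∀ j < m.length, (j ∈ S ↔ j ∈ T)) : maskProd n m S = maskProd n m T := by
  unfold maskProd
  congr 2
  refine List.filter_congr fun j hj => ?_
  rw [List.mem_range] at hj
  simp [h j hj]

lemma range_len (l : List ℕ) (hne : l ≠ []) :
    List.range l.length = List.range (l.length - 1) ++ [l.length - 1] := by
  have h : l.length = (l.length - 1) + 1 := by
    have := List.length_pos_iff.mpr hne; omega
  conv_lhs => rw [h]
  rw [List.range_succ]

lemma maskProd_dropLast (n : ℕ) (l : List ℕ) (hne : l ≠ []) (T : Finset ℕ)
    (hT : ∀ j ∈ T, j < l.length - 1) :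
    maskProd n l T = maskProd n l.dropLast T := by
  unfold maskProd
  rw [range_len l hne, List.filter_append, List.length_dropLast]
  have h2 : List.filter (fun j => decide (j ∈ T)) [l.length - 1] = [] := by
    simp only [List.filter_eq_nil_iff]
    intro a ha
    simp only [List.mem_singleton] at ha
    subst ha
    simp only [decide_eq_true_eq]
    intro hmem
    exact absurd (hT _ hmem) (by omega)
  rw [h2, List.append_nil]
  congr 1
  refine List.map_congr_left fun j hj => ?_
  have hj' : j < l.length - 1 := List.mem_range.mp (List.mem_of_mem_filter hj)
  exact (getD_dropLast l j hj').symm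

lemma maskProd_insert (n : ℕ) (l : List ℕ) (hne : l ≠ []) (T : Finset ℕ)
    (hT : ∀ j ∈ T, j < l.length - 1) :
    maskProd n l (insert (l.length - 1) T) =
      maskProd n l.dropLast T * gen n (l.getD (l.length - 1) 0) := by
  unfold maskProd
  rw [range_len l hne, List.filter_append, List.length_dropLast]
  have h2 : List.filter (fun j => decide (j ∈ insert (l.length - 1) T)) [l.length - 1]
      = [l.length - 1] := by simp
  rw [h2, List.map_append, wordProd_append]
  congr 1
  · have hf : List.filter (fun j => decide (j ∈ insert (l.length - 1) T)) (List.range (l.length - 1))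
        = List.filter (fun j => decide (j ∈ T)) (List.range (l.length - 1)) := by
      refine List.filter_congr fun j hj => ?_
      have hj' : j < l.length - 1 := List.mem_range.mp hj
      simp only [decide_eq_decide, Finset.mem_insert]
      constructor
      · rintro (h | h); · omega
        exact h
      · exact fun h => Or.inr h
    rw [hf]
    congr 1
    refine List.map_congr_left fun j hj => ?_
    have hj' : j < l.length - 1 := List.mem_range.mp (List.mem_of_mem_filter hj)
    exact (getD_dropLast l j hj').symm

lemma defectSet_card (n : ℕ) (l : List ℕ) (hne : l ≠ []) (S T : Finset ℕ)
    (hT : ∀ j ∈ T, j < l.length - 1)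
    (hST : ∀ j < l.length - 1, (j ∈ S ↔ j ∈ T)) :
    (defectSet n l S).card = (defectSet n l.dropLast T).card +
      (if len n (maskProd n l.dropLast T * gen n (l.getD (l.length - 1) 0))
          < len n (maskProd n l.dropLast T) then 1 else 0) := by
  have hlen : 0 < l.length := List.length_pos_iff.mpr hne
  have hmask : ∀ j ≤ l.length - 1, maskProd n (l.take j) S = maskProd n (l.dropLast.take j) T := by
    intro j hj
    rw [← take_dropLast l j hj]
    refine maskProd_congr n (l.take j) S T fun j' hj' => ?_
    rw [List.length_take] at hj'
    exact hST j' (by omega)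
  have hrange : Finset.range l.length = insert (l.length - 1) (Finset.range (l.length - 1)) := by
    conv_lhs => rw [show l.length = (l.length - 1) + 1 by omega]
    rw [Finset.range_add_one]
  have hfilter : (Finset.range (l.length - 1)).filter (fun j =>
      len n (maskProd n (l.take j) S * gen n (l.getD j 0)) < len n (maskProd n (l.take j) S))
      = defectSet n l.dropLast T := by
    unfold defectSet
    rw [List.length_dropLast]
    refine Finset.filter_congr fun j hj => ?_
    rw [Finset.mem_range] at hj
    rw [hmask j (le_of_lt hj), getD_dropLast l j hj]
  have hcond : maskProd n (l.take (l.length - 1)) S = maskProd n l.dropLast T := by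
    rw [hmask (l.length - 1) le_rfl, List.take_of_length_le (by rw [List.length_dropLast])]
  have hnm : l.length - 1 ∉ Finset.filter (fun j =>
      len n (maskProd n (l.take j) S * gen n (l.getD j 0)) < len n (maskProd n (l.take j) S))
      (Finset.range (l.length - 1)) := by
    intro hmem
    have := Finset.mem_range.mp (Finset.mem_filter.mp hmem).1
    omega
  unfold defectSet
  rw [hrange, Finset.filter_insert, hcond]
  split_ifs with h1
  · rw [Finset.card_insert_of_notMem hnm, hfilter]
    rfl
  · rw [hfilter]
    rfl


/-- recursion `P_x(a) = q^{c_s(x)} P_x(a/s) + q^{1-c_s(x)} P_{xs}(a/s)`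
where `s` is the last letter of the reduced word `a` and `c_s(x) = 1` iff `xs < x`. -/
theorem stmt6 (n : ℕ) (w : Equiv.Perm (Fin n)) (l : List ℕ) (hl : IsReducedWord n w l)
    (hne : l ≠ []) (x : Equiv.Perm (Fin n)) :
    defPoly n l x =
      (X : Polynomial ℤ) ^ (if len n (x * gen n (l.getD (l.length - 1) 0)) < len n x
          then 1 else 0)
        * defPoly n l.dropLast x +
      (X : Polynomial ℤ) ^ (1 - (if len n (x * gen n (l.getD (l.length - 1) 0)) < len n x
          then 1 else 0))
        * defPoly n l.dropLast (x * gen n (l.getD (l.length - 1) 0)) := by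
  have hlen : 0 < l.length := List.length_pos_iff.mpr hne
  set s := l.getD (l.length - 1) 0 with hs
  have hsvalid : 1 ≤ s ∧ s < n := hl.1 s (by
    rw [hs, List.getD_eq_getElem _ _ (by omega)]; exact List.getElem_mem _)
  have hdl : l.dropLast.length = l.length - 1 := List.length_dropLast
  have hrange2 : Finset.range l.length = insert (l.length - 1) (Finset.range (l.length - 1)) := by
    conv_lhs => rw [show l.length = (l.length - 1) + 1 by omega]
    rw [Finset.range_add_one]
  unfold defPoly
  rw [hrange2, Finset.sum_powerset_insert Finset.notMem_range_self, hdl]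
  congr 1
  · rw [Finset.mul_sum]
    refine Finset.sum_congr rfl fun T hT => ?_
    have hT' : ∀ j ∈ T, j < l.length - 1 := fun j hj =>
      Finset.mem_range.mp (Finset.mem_powerset.mp hT hj)
    rw [maskProd_dropLast n l hne T hT']
    by_cases hx : maskProd n l.dropLast T = x
    · rw [if_pos hx, if_pos hx,
        defectSet_card n l hne T T hT' (fun _ _ => Iff.rfl), hx, pow_add, mul_comm]
    · rw [if_neg hx, if_neg hx, mul_zero]
  · rw [Finset.mul_sum]
    refine Finset.sum_congr rfl fun T hT => ?_
    have hT' : ∀ j ∈ T, j < l.length - 1 := fun j hj =>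
      Finset.mem_range.mp (Finset.mem_powerset.mp hT hj)
    rw [maskProd_insert n l hne T hT']
    have hiff : (maskProd n l.dropLast T * gen n s = x) ↔
        (maskProd n l.dropLast T = x * gen n s) := by
      constructor
      · intro h; rw [← h, mul_assoc, gen_mul_self, mul_one]
      · intro h; rw [h, mul_assoc, gen_mul_self, mul_one]
    have hins : ∀ j < l.length - 1, (j ∈ insert (l.length - 1) T ↔ j ∈ T) := by
      intro j hj
      rw [Finset.mem_insert]
      constructor
      · rintro (h | h)
        · omega
        · exact h
      · exact fun h => Or.inr h
    by_cases hx : maskProd n l.dropLast T = x * gen n s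
    · rw [if_pos (hiff.mpr hx), if_pos hx,
        defectSet_card n l hne (insert (l.length - 1) T) T hT' hins, hx]
      have hgg : x * gen n s * gen n s = x := by rw [mul_assoc, gen_mul_self, mul_one]
      rw [hgg]
      have hne' := len_mul_gen_ne n s hsvalid x
      by_cases hlt : len n (x * gen n s) < len n x
      · rw [if_pos hlt, if_neg (by omega), pow_add, mul_comm]
      · have hlt2 : len n x < len n (x * gen n s) := by omega
        rw [if_neg hlt, if_pos hlt2, pow_add, mul_comm]
    · rw [if_neg (fun h => hx (hiff.mp h)), if_neg hx, mul_zero]
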